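/- arXiv:1006.2152 — 2 statements merged into one kernel-verified Lean document; each statement's English description precedes it below -/
import Mathlib

section
/- Let α be a real number with 1/2 < α ≤ 1, let C₁, C₂ > 0, let f : [0,1] → ℝ satisfy |f(s) - f(t)| ≤ C₁|s - t|^α for all s, t ∈ [0,1], and let Γ = {(x, f(x)) : x ∈ [0,1]} be its graph. Let F : ℝ² → ℝ be a continuous function such that: (i) |F(a) - F(b)| ≤ ‖a - b‖ whenever a, b ∈ ℝ² and the closed segment from a to b is disjoint from Γ; and (ii) |F(a) - F(b)| ≤ C₂‖a - b‖^α for all a, b ∈ ℝ². Then for Lebesgue-almost every y ∈ ℝ, the function x ↦ F(x, y) is absolutely continuous on [0,1]. -/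
open Set MeasureTheory
open scoped ENNReal NNReal

/-- `g` is absolutely continuous on `[0,1]` in the classical ε-δ sense. -/
def AbsolutelyContinuousOnUnitInterval (g : ℝ → ℝ) : Prop :=
  ∀ ε > (0 : ℝ), ∃ δ > (0 : ℝ), ∀ (n : ℕ) (a b : Fin n → ℝ),
    (∀ i, 0 ≤ a i ∧ a i < b i ∧ b i ≤ 1) →
    (Pairwise fun i j => Disjoint (Ioo (a i) (b i)) (Ioo (a j) (b j))) →
    (∑ i, (b i - a i)) < δ → (∑ i, |g (b i) - g (a i)|) < ε

namespace JonesACL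

/-- dyadic scale -/
noncomputable def dd (m : ℕ) : ℝ := ((2:ℝ)^m)⁻¹

lemma dd_pos (m : ℕ) : 0 < dd m := by unfold dd; positivity

lemma dd_succ (m : ℕ) : dd (m+1) = dd m / 2 := by
  simp [dd, pow_succ]; ring

lemma dd_zero : dd 0 = 1 := by simp [dd]

lemma dd_anti {m m' : ℕ} (h : m ≤ m') : dd m' ≤ dd m := by
  apply inv_anti₀ (by positivity)
  exact pow_le_pow_right₀ (by norm_num) h

lemma dd_lt_dd_rev {m m' : ℕ} (h : dd m < dd m') : m' < m := by
  by_contra hc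
  exact absurd (dd_anti (not_lt.1 hc)) (not_le.2 h)

/-- closed dyadic interval intersected with [0,1] -/
noncomputable def dyK (m k : ℕ) : Set ℝ := Icc ((k:ℝ)/2^m) (((k:ℝ)+1)/2^m) ∩ Icc 0 1

open scoped Classical in
/-- set of level-`m` dyadic indices whose interval meets the level set `{f = y}` -/
noncomputable def DS (f : ℝ → ℝ) (y : ℝ) (m : ℕ) : Finset ℕ :=
  (Finset.range (2^m)).filter (fun k => y ∈ f '' dyK m k)

noncomputable def hh (α : ℝ) (f : ℝ → ℝ) (y : ℝ) (m : ℕ) : ℝ :=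
  ((DS f y m).card : ℝ) * (dd m ^ α)

lemma hh_nonneg (α : ℝ) (hα : 0 < α) (f : ℝ → ℝ) (y : ℝ) (m : ℕ) : 0 ≤ hh α f y m := by
  have h := Real.rpow_pos_of_pos (dd_pos m) α
  unfold hh
  positivity

lemma kmem (x : ℝ) (hx0 : 0 ≤ x) (hx1 : x ≤ 1) (m : ℕ) :
    min (Nat.floor (x * 2^m)) (2^m - 1) < 2^m ∧
    x ∈ Icc (((min (Nat.floor (x * 2^m)) (2^m - 1) : ℕ) : ℝ)/2^m)
          ((((min (Nat.floor (x * 2^m)) (2^m - 1) : ℕ) : ℝ) + 1)/2^m) := by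
  have h2m : (0:ℝ) < 2^m := by positivity
  have h1 : (1:ℕ) ≤ 2^m := Nat.one_le_two_pow
  have hxm : 0 ≤ x * 2^m := by positivity
  set k : ℕ := min (Nat.floor (x * 2^m)) (2^m - 1) with hkdef
  have hklt : k < 2^m := lt_of_le_of_lt (min_le_right _ _) (by omega)
  have hlow : (k:ℝ) ≤ x * 2^m := by
    by_cases hle : Nat.floor (x * 2^m) ≤ 2^m - 1
    · rw [hkdef, min_eq_left hle]
      exact Nat.floor_le hxm
    · have : (k:ℕ) ≤ Nat.floor (x * 2^m) := min_le_left _ _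
      calc (k:ℝ) ≤ (Nat.floor (x * 2^m) : ℝ) := by exact_mod_cast this
        _ ≤ x * 2^m := Nat.floor_le hxm
  have hhigh : x * 2^m ≤ (k:ℝ) + 1 := by
    by_cases hle : Nat.floor (x * 2^m) ≤ 2^m - 1
    · rw [hkdef, min_eq_left hle]
      exact (Nat.lt_floor_add_one (x * 2^m)).le
    · have hge : (2^m : ℕ) ≤ Nat.floor (x * 2^m) := by omega
      have hk2 : k = 2^m - 1 := by rw [hkdef]; omega
      have hcast : (k:ℝ) = 2^m - 1 := by
        rw [hk2]; push_cast [h1]; ring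
      have : x * 2^m ≤ 2^m := by nlinarith
      rw [hcast]; linarith [this]
  refine ⟨hklt, ?_, ?_⟩
  · rw [div_le_iff₀ h2m]; exact hlow
  · rw [le_div_iff₀ h2m]; exact hhigh

/-- the elementary counting lemma: at most 6 long disjoint intervals fit near a dyadic interval -/
lemma counting {n : ℕ} (a b : Fin n → ℝ)
    (hab : ∀ i, 0 ≤ a i ∧ a i < b i ∧ b i ≤ 1)
    (hdisj : Pairwise fun i j => Disjoint (Ioo (a i) (b i)) (Ioo (a j) (b j)))
    (T : Finset (Fin n)) (m : ℕ) (w : ℝ)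
    (hsub : ∀ i ∈ T, Ioo (a i) (b i) ⊆ Ioo w (w + 3 * dd m))
    (hlong : ∀ i ∈ T, dd m / 2 ≤ b i - a i) :
    T.card ≤ 6 := by
  have hm := dd_pos m
  have hmeas : ∀ i ∈ T, MeasurableSet (Ioo (a i) (b i)) := fun i _ => measurableSet_Ioo
  have hpd : (↑T : Set (Fin n)).PairwiseDisjoint (fun i => Ioo (a i) (b i)) :=
    hdisj.set_pairwise _
  have h1 : ∑ i ∈ T, volume (Ioo (a i) (b i)) = volume (⋃ i ∈ T, Ioo (a i) (b i)) :=
    (measure_biUnion_finset hpd hmeas).symm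
  have h2 : volume (⋃ i ∈ T, Ioo (a i) (b i)) ≤ volume (Ioo w (w + 3 * dd m)) :=
    measure_mono (Set.iUnion₂_subset hsub)
  have h3 : ∀ i ∈ T, ENNReal.ofReal (dd m / 2) ≤ volume (Ioo (a i) (b i)) := by
    intro i hi
    rw [Real.volume_Ioo]
    exact ENNReal.ofReal_le_ofReal (hlong i hi)
  have h4a : (T.card : ℝ≥0∞) * ENNReal.ofReal (dd m / 2)
      = ∑ _i ∈ T, ENNReal.ofReal (dd m / 2) := by
    rw [Finset.sum_const, nsmul_eq_mul]
  have h4b : volume (Ioo w (w + 3 * dd m)) = ENNReal.ofReal (3 * dd m) := by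
    rw [Real.volume_Ioo]; ring_nf
  have h4 : (T.card : ℝ≥0∞) * ENNReal.ofReal (dd m / 2) ≤ ENNReal.ofReal (3 * dd m) := by
    rw [h4a, ← h4b]
    exact le_trans (le_trans (Finset.sum_le_sum h3) h1.le) h2
  have h5 : (T.card : ℝ) * (dd m / 2) ≤ 3 * dd m := by
    rw [show ((T.card : ℝ≥0∞)) = ENNReal.ofReal (T.card : ℝ) by
          rw [ENNReal.ofReal_natCast],
        ← ENNReal.ofReal_mul (by positivity)] at h4
    exact (ENNReal.ofReal_le_ofReal_iff (by positivity)).1 h4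
  have h6 : (T.card : ℝ) ≤ 6 := by nlinarith
  exact_mod_cast h6


lemma sum_tail_le (h : ℕ → ℝ) (n₀ : ℕ) (hnn : ∀ k, 0 ≤ h k)
    (hs : Summable fun k => h (k + n₀)) (M : Finset ℕ) (hge : ∀ m ∈ M, n₀ ≤ m) :
    ∑ m ∈ M, h m ≤ ∑' k, h (k + n₀) := by
  have hre : ∑ j ∈ M.image (· - n₀), h (j + n₀) = ∑ m ∈ M, h m := by
    rw [Finset.sum_image]
    · exact Finset.sum_congr rfl fun m hm => by rw [Nat.sub_add_cancel (hge m hm)]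
    · intro m₁ h₁ m₂ h₂ heq
      have := hge m₁ h₁
      have := hge m₂ h₂
      simp only at heq
      omega
  rw [← hre]
  exact Summable.sum_le_tsum _ (fun k _ => hnn _) hs

open scoped Classical in
lemma det (α C₂ : ℝ) (hα0 : 0 < α) (hC₂ : 0 < C₂) (f : ℝ → ℝ) (y : ℝ) (g : ℝ → ℝ)
    (hLip' : ∀ a b : ℝ, 0 ≤ a → a ≤ b → b ≤ 1 →
      (∀ x ∈ Icc a b, f x ≠ y) → |g b - g a| ≤ b - a)
    (hHol' : ∀ a b : ℝ, |g b - g a| ≤ C₂ * |b - a| ^ α)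
    (hfin : (∑' m, ENNReal.ofReal (hh α f y m)) ≠ ⊤) :
    AbsolutelyContinuousOnUnitInterval g := by
  have hsum : Summable (hh α f y) := by
    have h := ENNReal.summable_toReal hfin
    exact h.congr fun m => ENNReal.toReal_ofReal (hh_nonneg α hα0 f y m)
  intro ε hε
  set c : ℝ := ε / (24 * C₂) with hc
  have hcpos : 0 < c := by positivity
  obtain ⟨n₀, hn₀⟩ :=
    (Filter.Tendsto.eventually_lt_const hcpos (tendsto_sum_nat_add (hh α f y))).exists
  set T₀ : ℝ := ∑' k, hh α f y (k + n₀) with hT₀def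
  have hT₀c : T₀ < c := hn₀
  have hT₀sum : Summable (fun k => hh α f y (k + n₀)) := (summable_nat_add_iff n₀).2 hsum
  have hT₀nn : 0 ≤ T₀ := tsum_nonneg fun k => hh_nonneg α hα0 f y _
  refine ⟨min (ε/2) (dd (n₀+1)), lt_min (by positivity) (dd_pos _), ?_⟩
  intro n a b hab hdisj hsumlt
  have hδle : min (ε/2) (dd (n₀+1)) ≤ dd (n₀+1) := min_le_right _ _
  have hδle2 : min (ε/2) (dd (n₀+1)) ≤ ε/2 := min_le_left _ _
  have hLpos : ∀ i, 0 < b i - a i := fun i => sub_pos.2 (hab i).2.1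
  have hLlt : ∀ i, b i - a i < min (ε/2) (dd (n₀+1)) := by
    intro i
    calc b i - a i ≤ ∑ j, (b j - a j) :=
          Finset.single_le_sum (fun j _ => (hLpos j).le) (Finset.mem_univ i)
      _ < _ := hsumlt
  have hsub01 : ∀ i, Icc (a i) (b i) ⊆ Icc (0:ℝ) 1 := by
    intro i
    exact Icc_subset_Icc (hab i).1 (hab i).2.2
  -- the "bad" indices, whose interval meets the level set
  set E : Fin n → Prop := fun i => ∃ x ∈ Icc (a i) (b i), f x = y with hE
  set S : Finset (Fin n) := Finset.univ.filter E with hS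
  set xx : Fin n → ℝ := fun i => if h : E i then h.choose else 0 with hxxdef
  have hxx : ∀ i ∈ S, xx i ∈ Icc (a i) (b i) ∧ f (xx i) = y := by
    intro i hi
    have hEi : E i := (Finset.mem_filter.1 hi).2
    simp only [hxxdef, dif_pos hEi]
    exact hEi.choose_spec
  -- the scale of each interval
  have ex : ∀ i : Fin n, ∃ m : ℕ, dd (m+1) < b i - a i := by
    intro i
    obtain ⟨m, hm⟩ := pow_unbounded_of_one_lt ((b i - a i)⁻¹) (one_lt_two (α := ℝ))
    refine ⟨m, ?_⟩
    have h2 : (b i - a i)⁻¹ < 2^(m+1) := lt_of_lt_of_le hm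
      (pow_le_pow_right₀ one_le_two (Nat.le_succ m))
    have := (inv_lt_comm₀ (by positivity : (0:ℝ) < 2^(m+1)) (hLpos i)).2
    exact this h2
  set nn : Fin n → ℕ := fun i => Nat.find (ex i) with hnn
  have p1 : ∀ i, dd (nn i + 1) < b i - a i := fun i => Nat.find_spec (ex i)
  have p2 : ∀ i, b i - a i ≤ dd (nn i) := by
    intro i
    rcases Nat.eq_zero_or_pos (nn i) with h0 | hpos
    · rw [h0, dd_zero]
      have h1 := (hab i).1
      have h2 := (hab i).2.2
      linarith [(hab i).2.1]
    · have hmin := Nat.find_min (ex i) (Nat.sub_lt hpos one_pos)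
      have : nn i - 1 + 1 = nn i := Nat.succ_pred_eq_of_pos hpos
      rw [this] at hmin
      linarith [not_lt.1 hmin]
  have p3 : ∀ i, n₀ < nn i := by
    intro i
    have h1 : dd (nn i + 1) < dd (n₀ + 1) :=
      lt_of_lt_of_le (lt_of_lt_of_le (p1 i) (hLlt i).le) hδle
    have := dd_lt_dd_rev h1
    omega
  set kk : Fin n → ℕ := fun i => min (Nat.floor (xx i * 2^(nn i))) (2^(nn i) - 1) with hkk
  have hkmem : ∀ i ∈ S, kk i < 2^(nn i) ∧
      xx i ∈ Icc ((kk i : ℝ)/2^(nn i)) (((kk i : ℝ) + 1)/2^(nn i)) := by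
    intro i hi
    have h01 := hsub01 i (hxx i hi).1
    exact kmem (xx i) h01.1 h01.2 (nn i)
  -- per-interval estimate
  have key : ∀ i, |g (b i) - g (a i)| ≤
      (b i - a i) + (if i ∈ S then 2*C₂*(dd (nn i) ^ α) else 0) := by
    intro i
    by_cases hi : i ∈ S
    · rw [if_pos hi]
      obtain ⟨hxi, hfxi⟩ := hxx i hi
      have hb1 : |g (b i) - g (xx i)| ≤ C₂ * dd (nn i) ^ α := by
        refine le_trans (hHol' (xx i) (b i)) ?_
        have h1 : |b i - xx i| ≤ dd (nn i) := by
          rw [abs_of_nonneg (by linarith [hxi.2])]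
          linarith [hxi.1, p2 i]
        exact mul_le_mul_of_nonneg_left
          (Real.rpow_le_rpow (abs_nonneg _) h1 hα0.le) hC₂.le
      have hb2 : |g (xx i) - g (a i)| ≤ C₂ * dd (nn i) ^ α := by
        refine le_trans (hHol' (a i) (xx i)) ?_
        have h1 : |xx i - a i| ≤ dd (nn i) := by
          rw [abs_of_nonneg (by linarith [hxi.1])]
          linarith [hxi.2, p2 i]
        exact mul_le_mul_of_nonneg_left
          (Real.rpow_le_rpow (abs_nonneg _) h1 hα0.le) hC₂.le
      have htri : |g (b i) - g (a i)| ≤ |g (b i) - g (xx i)| + |g (xx i) - g (a i)| :=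
        abs_sub_le _ _ _
      have : (0:ℝ) ≤ b i - a i := (hLpos i).le
      linarith
    · rw [if_neg hi]
      have hnE : ∀ x ∈ Icc (a i) (b i), f x ≠ y := by
        intro x hx hfx
        exact hi (Finset.mem_filter.2 ⟨Finset.mem_univ i, ⟨x, hx, hfx⟩⟩)
      have := hLip' (a i) (b i) (hab i).1 (hab i).2.1.le (hab i).2.2 hnE
      linarith
  -- the crucial counting estimate
  have key2 : ∑ i ∈ S, dd (nn i) ^ α ≤ 6 * T₀ := by
    set φ : Fin n → ℕ × ℕ := fun i => (nn i, kk i) with hφ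
    set P : Finset (ℕ × ℕ) := S.image φ with hP
    have hcomp : ∑ i ∈ S, dd (nn i) ^ α
        = ∑ p ∈ P, (S.filter (fun i => φ i = p)).card • (dd p.1 ^ α) :=
      Finset.sum_comp (fun p : ℕ × ℕ => dd p.1 ^ α) φ
    have hcard : ∀ p ∈ P, (S.filter (fun i => φ i = p)).card ≤ 6 := by
      intro p hp
      apply counting a b hab hdisj _ p.1 ((p.2 : ℝ) * dd p.1 - dd p.1)
      · intro i hi
        obtain ⟨hiS, hφi⟩ := Finset.mem_filter.1 hi
        have hnni : nn i = p.1 := by rw [← hφi]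
        have hkki : kk i = p.2 := by rw [← hφi]
        obtain ⟨hxi, hfxi⟩ := hxx i hiS
        obtain ⟨hklt, hxmem⟩ := hkmem i hiS
        have hdd : ((2:ℝ)^(nn i))⁻¹ = dd (nn i) := rfl
        have hdiv : ∀ r : ℝ, r / 2^(nn i) = r * dd (nn i) := by
          intro r; rw [div_eq_mul_inv, hdd]
        rw [hdiv, hdiv] at hxmem
        have hL := p2 i
        have hxlow : (kk i : ℝ) * dd (nn i) ≤ xx i := hxmem.1
        have hxhigh : xx i ≤ ((kk i : ℝ) + 1) * dd (nn i) := hxmem.2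
        apply Ioo_subset_Ioo
        · rw [← hnni, ← hkki]
          have : a i ≥ xx i - (b i - a i) := by linarith [hxi.2]
          linarith
        · rw [← hnni, ← hkki]
          have : b i ≤ xx i + (b i - a i) := by linarith [hxi.1]
          have hdd0 := dd_pos (nn i)
          nlinarith
      · intro i hi
        obtain ⟨hiS, hφi⟩ := Finset.mem_filter.1 hi
        have hnni : nn i = p.1 := by rw [← hφi]
        rw [← hnni]
        have := p1 i
        rw [dd_succ] at this
        linarith
    have hstep1 : ∑ p ∈ P, (S.filter (fun i => φ i = p)).card • (dd p.1 ^ α)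
        ≤ ∑ p ∈ P, 6 * (dd p.1 ^ α) := by
      apply Finset.sum_le_sum
      intro p hp
      rw [nsmul_eq_mul]
      apply mul_le_mul_of_nonneg_right _ (Real.rpow_pos_of_pos (dd_pos _) α).le
      exact_mod_cast hcard p hp
    have hstep2 : ∑ p ∈ P, dd p.1 ^ α ≤ ∑ m ∈ P.image Prod.fst, hh α f y m := by
      rw [← Finset.sum_fiberwise_of_maps_to
        (fun p hp => Finset.mem_image_of_mem Prod.fst hp) (fun p => dd p.1 ^ α)]
      apply Finset.sum_le_sum
      intro m hm
      have hinner : ∑ p ∈ P.filter (fun p => p.1 = m), dd p.1 ^ α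
          = (P.filter (fun p => p.1 = m)).card * dd m ^ α := by
        rw [Finset.sum_congr rfl (fun p hp => by
          rw [(Finset.mem_filter.1 hp).2]), Finset.sum_const, nsmul_eq_mul]
      rw [hinner]
      unfold hh
      apply mul_le_mul_of_nonneg_right _ (Real.rpow_pos_of_pos (dd_pos _) α).le
      have : (P.filter (fun p => p.1 = m)).card ≤ (DS f y m).card := by
        apply Finset.card_le_card_of_injOn (fun p => p.2)
        · intro p hp
          obtain ⟨hpP, hpm⟩ := Finset.mem_filter.1 hp
          obtain ⟨i, hiS, hφi⟩ := Finset.mem_image.1 hpP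
          have hnni : nn i = p.1 := by rw [← hφi]
          have hkki : kk i = p.2 := by rw [← hφi]
          obtain ⟨hxi, hfxi⟩ := hxx i hiS
          obtain ⟨hklt, hxmem⟩ := hkmem i hiS
          beta_reduce
          rw [← hpm, ← hnni, ← hkki, Finset.mem_coe]
          unfold DS
          rw [Finset.mem_filter]
          refine ⟨Finset.mem_range.2 hklt, ?_⟩
          exact ⟨xx i, ⟨hxmem, hsub01 i hxi⟩, hfxi⟩
        · intro p hp q hq hpq
          have hpm := (Finset.mem_filter.1 hp).2
          have hqm := (Finset.mem_filter.1 hq).2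
          exact Prod.ext (hpm.trans hqm.symm) hpq
      exact_mod_cast this
    have hstep3 : ∑ m ∈ P.image Prod.fst, hh α f y m ≤ T₀ := by
      apply sum_tail_le _ _ (fun k => hh_nonneg α hα0 f y k) hT₀sum
      intro m hm
      obtain ⟨p, hpP, hpm⟩ := Finset.mem_image.1 hm
      obtain ⟨i, hiS, hφi⟩ := Finset.mem_image.1 hpP
      have h1 : nn i = p.1 := by rw [← hφi]
      have h2 := p3 i
      omega
    calc ∑ i ∈ S, dd (nn i) ^ α
        = ∑ p ∈ P, (S.filter (fun i => φ i = p)).card • (dd p.1 ^ α) := hcomp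
      _ ≤ ∑ p ∈ P, 6 * (dd p.1 ^ α) := hstep1
      _ = 6 * ∑ p ∈ P, dd p.1 ^ α := by rw [Finset.mul_sum]
      _ ≤ 6 * ∑ m ∈ P.image Prod.fst, hh α f y m := by linarith [hstep2]
      _ ≤ 6 * T₀ := by linarith [hstep3]
  -- put everything together
  calc ∑ i, |g (b i) - g (a i)|
      ≤ ∑ i, ((b i - a i) + (if i ∈ S then 2*C₂*(dd (nn i) ^ α) else 0)) :=
        Finset.sum_le_sum fun i _ => key i
    _ = ∑ i, (b i - a i) + ∑ i ∈ S, 2*C₂*(dd (nn i) ^ α) := by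
        rw [Finset.sum_add_distrib]
        congr 1
        rw [Finset.sum_ite_mem, Finset.univ_inter]
    _ = ∑ i, (b i - a i) + 2*C₂* ∑ i ∈ S, dd (nn i) ^ α := by
        rw [Finset.mul_sum]
    _ < ε := by
        have h1 : ∑ i, (b i - a i) < ε/2 := lt_of_lt_of_le hsumlt hδle2
        have h2 : 2*C₂* ∑ i ∈ S, dd (nn i) ^ α ≤ 2*C₂*(6*T₀) := by
          apply mul_le_mul_of_nonneg_left key2 (by positivity)
        have h3 : 2*C₂*(6*T₀) < 2*C₂*(6*c) := by
          have h2C : (0:ℝ) < 2*C₂ := by positivity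
          nlinarith [hT₀c]
        have hceq : 2*C₂*(6*c) = ε/2 := by
          rw [hc]; field_simp; ring
        linarith

end JonesACL

/-- P. W. Jones: Let `Γ` be a Hölder-α graph with `1/2 < α ≤ 1`. If a continuous
`F : ℝ² → ℝ` is `1`-Lipschitz along segments avoiding `Γ` and globally Hölder-α, then for almost
every `y` the function `x ↦ F (x, y)` is absolutely continuous on `[0,1]`. -/
theorem bounded_gradient_acl_off_holder_graph
    (α : ℝ) (hα₁ : 1 / 2 < α) (hα₂ : α ≤ 1)
    (C₁ C₂ : ℝ) (hC₁ : 0 < C₁) (hC₂ : 0 < C₂)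
    (f : ℝ → ℝ)
    (hf : ∀ s ∈ Icc (0 : ℝ) 1, ∀ t ∈ Icc (0 : ℝ) 1, |f s - f t| ≤ C₁ * |s - t| ^ α)
    (Γ : Set (ℝ × ℝ)) (hΓ : Γ = {q : ℝ × ℝ | ∃ x ∈ Icc (0 : ℝ) 1, q = (x, f x)})
    (F : ℝ × ℝ → ℝ) (hF_cont : Continuous F)
    (hLip : ∀ a b : ℝ × ℝ, segment ℝ a b ⊆ Γᶜ → |F a - F b| ≤ ‖a - b‖)
    (hHolder : ∀ a b : ℝ × ℝ, |F a - F b| ≤ C₂ * ‖a - b‖ ^ α) :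
    ∀ᵐ y : ℝ ∂volume, AbsolutelyContinuousOnUnitInterval fun x => F (x, y) := by
  classical
  open JonesACL in
  have hα0 : 0 < α := by linarith
  -- continuity of f on [0,1]
  have hfc : ContinuousOn f (Icc 0 1) := by
    rw [Metric.continuousOn_iff]
    intro x hx ε hε
    refine ⟨(ε/(2*C₁)) ^ (α⁻¹), Real.rpow_pos_of_pos (by positivity) _, ?_⟩
    intro z hz hdist
    have h1 : |f z - f x| ≤ C₁ * |z - x| ^ α := hf z hz x hx
    have h2 : |z - x| ^ α < ((ε/(2*C₁)) ^ (α⁻¹)) ^ α := by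
      apply Real.rpow_lt_rpow (abs_nonneg _) _ hα0
      rwa [Real.dist_eq] at hdist
    have h3 : ((ε/(2*C₁)) ^ (α⁻¹)) ^ α = ε/(2*C₁) :=
      Real.rpow_inv_rpow (by positivity) (ne_of_gt hα0)
    rw [Real.dist_eq]
    calc |f z - f x| ≤ C₁ * |z - x| ^ α := h1
      _ < C₁ * (ε / (2*C₁)) := by
          rw [← h3]
          exact mul_lt_mul_of_pos_left h2 hC₁
      _ < ε := by
          have hC₁' : C₁ ≠ 0 := ne_of_gt hC₁
          rw [show C₁ * (ε / (2*C₁)) = ε/2 from by field_simp]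
          linarith
  -- images of dyadic pieces are compact
  have himage : ∀ m k : ℕ, IsCompact (f '' dyK m k) := by
    intro m k
    apply IsCompact.image_of_continuousOn
    · exact isCompact_Icc.inter_right isClosed_Icc
    · exact hfc.mono fun x hx => hx.2
  -- volume bound for the images
  have hvol : ∀ m k : ℕ, volume (f '' dyK m k) ≤ ENNReal.ofReal (2*C₁*(dd m)^α) := by
    intro m k
    rcases Set.eq_empty_or_nonempty (dyK m k) with hem | ⟨t₀, ht₀⟩
    · rw [hem, Set.image_empty, measure_empty]
      exact zero_le
    · have hsub : f '' dyK m k ⊆ Icc (f t₀ - C₁*(dd m)^α) (f t₀ + C₁*(dd m)^α) := by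
        rintro _ ⟨x, hxK, rfl⟩
        have hxt : |x - t₀| ≤ dd m := by
          have h2m : (0:ℝ) < 2^m := by positivity
          have hx1 := hxK.1.1
          have hx2 := hxK.1.2
          have ht1 := ht₀.1.1
          have ht2 := ht₀.1.2
          have hw : ((k:ℝ)+1)/2^m - (k:ℝ)/2^m = dd m := by
            rw [dd]; field_simp; ring
          rw [abs_sub_le_iff]
          constructor <;> linarith
        have hb : |f x - f t₀| ≤ C₁ * (dd m)^α := by
          refine le_trans (hf x hxK.2 t₀ ht₀.2) ?_
          exact mul_le_mul_of_nonneg_left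
            (Real.rpow_le_rpow (abs_nonneg _) hxt hα0.le) hC₁.le
        rw [abs_sub_le_iff] at hb
        constructor <;> linarith [hb.1, hb.2]
      calc volume (f '' dyK m k) ≤ volume (Icc (f t₀ - C₁*(dd m)^α) (f t₀ + C₁*(dd m)^α)) :=
            measure_mono hsub
        _ = ENNReal.ofReal (2*C₁*(dd m)^α) := by
            rw [Real.volume_Icc]
            congr 1
            ring
  -- pointwise identity expressing `ofReal (hh)` as a sum of indicators
  have hpt : ∀ (m : ℕ) (y : ℝ), ENNReal.ofReal (hh α f y m)
      = ∑ k ∈ Finset.range (2^m),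
          (f '' dyK m k).indicator (fun _ => ENNReal.ofReal ((dd m)^α)) y := by
    intro m y
    rw [Finset.sum_indicator_eq_sum_filter]
    unfold hh DS
    rw [ENNReal.ofReal_mul (by positivity), ENNReal.ofReal_natCast,
        Finset.sum_const, nsmul_eq_mul]
  have hmeasm : ∀ m : ℕ, Measurable (fun y => ENNReal.ofReal (hh α f y m)) := by
    intro m
    have heq : (fun y => ENNReal.ofReal (hh α f y m))
        = fun y => ∑ k ∈ Finset.range (2^m),
            (f '' dyK m k).indicator (fun _ => ENNReal.ofReal ((dd m)^α)) y :=
      funext fun y => hpt m y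
    rw [heq]
    exact Finset.measurable_sum _ fun k _ =>
      measurable_const.indicator (himage m k).isClosed.measurableSet
  -- integral bound for each level
  have hintm : ∀ m : ℕ, ∫⁻ y, ENNReal.ofReal (hh α f y m) ∂volume
      ≤ ENNReal.ofReal ((2:ℝ)^m * ((dd m)^α * (2*C₁*(dd m)^α))) := by
    intro m
    have hme : ∀ k ∈ Finset.range (2^m), Measurable fun y =>
        (f '' dyK m k).indicator (fun _ => ENNReal.ofReal ((dd m)^α)) y :=
      fun k _ => measurable_const.indicator (himage m k).isClosed.measurableSet
    calc ∫⁻ y, ENNReal.ofReal (hh α f y m) ∂volume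
        = ∫⁻ y, ∑ k ∈ Finset.range (2^m),
            (f '' dyK m k).indicator (fun _ => ENNReal.ofReal ((dd m)^α)) y ∂volume :=
          lintegral_congr fun y => hpt m y
      _ = ∑ k ∈ Finset.range (2^m), ∫⁻ y,
            (f '' dyK m k).indicator (fun _ => ENNReal.ofReal ((dd m)^α)) y ∂volume :=
          lintegral_finset_sum _ hme
      _ = ∑ k ∈ Finset.range (2^m), ENNReal.ofReal ((dd m)^α) * volume (f '' dyK m k) := by
          refine Finset.sum_congr rfl fun k _ => ?_
          rw [lintegral_indicator (himage m k).isClosed.measurableSet,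
            setLIntegral_const]
      _ ≤ ∑ k ∈ Finset.range (2^m),
            ENNReal.ofReal ((dd m)^α) * ENNReal.ofReal (2*C₁*(dd m)^α) :=
          Finset.sum_le_sum fun k _ => mul_le_mul_right (hvol m k) _
      _ = ENNReal.ofReal ((2:ℝ)^m * ((dd m)^α * (2*C₁*(dd m)^α))) := by
          rw [Finset.sum_const, Finset.card_range, nsmul_eq_mul,
              ← ENNReal.ofReal_natCast (2^m),
              ← ENNReal.ofReal_mul (Real.rpow_pos_of_pos (dd_pos m) α).le,
              ← ENNReal.ofReal_mul (by positivity : (0:ℝ) ≤ ((2^m : ℕ) : ℝ))]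
          congr 1
          push_cast
          ring
  -- geometric series identity
  have hgeom : ∀ m : ℕ, (2:ℝ)^m * ((dd m)^α * (2*C₁*(dd m)^α))
      = (2*C₁) * ((2:ℝ)^(1-2*α))^m := by
    intro m
    have e0 : ((2:ℝ)^m : ℝ) = (2:ℝ)^((m:ℝ)) := (Real.rpow_natCast 2 m).symm
    have e1 : (dd m)^α = (2:ℝ)^(-((m:ℝ)*α)) := by
      rw [dd, e0, ← Real.rpow_neg (by norm_num : (0:ℝ) ≤ 2) (m:ℝ),
        ← Real.rpow_mul (by norm_num : (0:ℝ) ≤ 2)]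
      ring_nf
    have e2 : ((2:ℝ)^(1-2*α))^m = (2:ℝ)^((1-2*α)*(m:ℝ)) := by
      rw [Real.rpow_mul (by norm_num : (0:ℝ) ≤ 2), Real.rpow_natCast]
    rw [e1, e2, e0]
    rw [show (2:ℝ)^((m:ℝ)) * ((2:ℝ)^(-((m:ℝ)*α)) * (2*C₁*(2:ℝ)^(-((m:ℝ)*α))))
        = 2*C₁ * ((2:ℝ)^((m:ℝ)) * (2:ℝ)^(-((m:ℝ)*α)) * (2:ℝ)^(-((m:ℝ)*α))) from by ring]
    rw [← Real.rpow_add (by norm_num : (0:ℝ) < 2),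
        ← Real.rpow_add (by norm_num : (0:ℝ) < 2)]
    congr 1
    ring
  -- the total integral is finite
  have hfinint : ∫⁻ y, ∑' m, ENNReal.ofReal (hh α f y m) ∂volume ≠ ⊤ := by
    rw [lintegral_tsum fun m => (hmeasm m).aemeasurable]
    have hb := ENNReal.tsum_le_tsum hintm
    set r : ℝ := (2:ℝ)^(1-2*α) with hr
    have hr0 : 0 ≤ r := Real.rpow_nonneg (by norm_num) _
    have hr1 : r < 1 := Real.rpow_lt_one_of_one_lt_of_neg (by norm_num) (by linarith)
    have hgs : Summable (fun m : ℕ => 2*C₁ * r^m) :=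
      (summable_geometric_of_lt_one hr0 hr1).mul_left _
    apply ne_top_of_le_ne_top _ hb
    rw [show (fun m : ℕ => ENNReal.ofReal ((2:ℝ)^m * ((dd m)^α * (2*C₁*(dd m)^α))))
        = fun m : ℕ => ENNReal.ofReal (2*C₁*r^m) from funext fun m => by
          rw [hgeom m]]
    rw [← ENNReal.ofReal_tsum_of_nonneg (fun m => by positivity) hgs]
    exact ENNReal.ofReal_ne_top
  have hae := ae_lt_top (Measurable.ennreal_tsum hmeasm) hfinint
  -- the Lipschitz property along good horizontal segments
  have hLip' : ∀ y a b : ℝ, 0 ≤ a → a ≤ b → b ≤ 1 → (∀ x ∈ Icc a b, f x ≠ y) →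
      |F (b, y) - F (a, y)| ≤ b - a := by
    intro y a b ha hab hb1 hne
    have hseg : segment ℝ ((b,y) : ℝ × ℝ) ((a,y) : ℝ × ℝ) ⊆ Γᶜ := by
      rintro p ⟨u, v, hu, hv, huv, rfl⟩
      simp only [Prod.smul_mk, Prod.mk_add_mk, smul_eq_mul]
      intro hmem
      rw [hΓ] at hmem
      obtain ⟨x, hx01, hxeq⟩ := hmem
      rw [Prod.mk.injEq] at hxeq
      obtain ⟨hx1, hx2⟩ := hxeq
      have hyeq : u*y + v*y = y := by
        rw [← add_mul, huv, one_mul]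
      have hxab : x ∈ Icc a b := by
        constructor
        · nlinarith [hx1]
        · nlinarith [hx1]
      exact hne x hxab (by rw [← hx2, hyeq])
    have h1 := hLip (b,y) (a,y) hseg
    have h2 : ((b,y) : ℝ × ℝ) - (a,y) = (b - a, 0) := by
      rw [Prod.mk_sub_mk, sub_self]
    rw [h2, Prod.norm_def] at h1
    simp only [Real.norm_eq_abs, norm_zero] at h1
    have h3 : |b - a| ⊔ 0 = b - a := by
      rw [max_eq_left (abs_nonneg _), abs_of_nonneg (by linarith : (0:ℝ) ≤ b - a)]
    rw [h3] at h1
    exact h1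
  -- the global Hölder property along horizontal lines
  have hHol' : ∀ y a b : ℝ, |F (b, y) - F (a, y)| ≤ C₂ * |b - a| ^ α := by
    intro y a b
    have h1 := hHolder (b,y) (a,y)
    have h2 : ((b,y) : ℝ × ℝ) - (a,y) = (b - a, 0) := by
      rw [Prod.mk_sub_mk, sub_self]
    rw [h2, Prod.norm_def] at h1
    simp only [Real.norm_eq_abs, norm_zero] at h1
    rwa [max_eq_left (abs_nonneg _)] at h1
  filter_upwards [hae] with y hy
  exact JonesACL.det α C₂ hα0 hC₂ f y (fun x => F (x,y))
    (fun a b ha hab hb1 hne => hLip' y a b ha hab hb1 hne)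
    (fun a b => hHol' y a b) hy.ne
end

section
/- Let α ∈ (0, 1], let C > 0, and let f : [0,1] → ℝ satisfy |f(s) - f(t)| ≤ C|s - t|^α for all s, t ∈ [0,1], with graph Γ = {(x, f(x)) : x ∈ [0,1]} ⊂ ℝ². Then for Lebesgue-almost every y ∈ ℝ, the Hausdorff dimension of the horizontal slice {x ∈ [0,1] : f(x) = y} is at most 1 - α. -/
open Set MeasureTheory Filter Topology
open scoped ENNReal NNReal Classical

/-- For a Hölder-α function `f` on `[0,1]`, almost every horizontal slice of its
graph, i.e. the set `{x ∈ [0,1] : f x = y}`, has Hausdorff dimension at most `1 - α`. -/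
theorem holder_graph_slice_dimH
    (α : ℝ) (hα₁ : 0 < α) (hα₂ : α ≤ 1)
    (C : ℝ) (hC : 0 < C)
    (f : ℝ → ℝ)
    (hf : ∀ s ∈ Icc (0 : ℝ) 1, ∀ t ∈ Icc (0 : ℝ) 1, |f s - f t| ≤ C * |s - t| ^ α) :
    ∀ᵐ y : ℝ ∂MeasureTheory.volume,
      dimH {x : ℝ | x ∈ Icc (0 : ℝ) 1 ∧ f x = y} ≤ ENNReal.ofReal (1 - α) := by
  -- continuity of f on [0,1]
  have hcont : ContinuousOn f (Icc 0 1) := by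
    have hh : HolderOnWith C.toNNReal α.toNNReal f (Icc 0 1) := by
      intro x hx y hy
      rw [edist_dist, edist_dist, Real.dist_eq, Real.dist_eq]
      calc ENNReal.ofReal |f x - f y| ≤ ENNReal.ofReal (C * |x - y| ^ α) :=
            ENNReal.ofReal_le_ofReal (hf x hx y hy)
        _ = _ := by
            rw [ENNReal.ofReal_mul hC.le,
              ← ENNReal.ofReal_rpow_of_nonneg (abs_nonneg _) hα₁.le,
              Real.coe_toNNReal α hα₁.le]
            rfl
    exact hh.continuousOn (by simpa using hα₁)
  -- intervals
  set I : ℕ → ℕ → Set ℝ := fun n k => Icc ((k : ℝ) / (n + 1)) ((k + 1 : ℝ) / (n + 1)) with hI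
  have hIsub : ∀ n, ∀ k : Fin (n + 1), I n k ⊆ Icc (0 : ℝ) 1 := by
    intro n k
    apply Icc_subset_Icc
    · positivity
    · rw [div_le_one (by positivity)]
      have : (k : ℝ) ≤ n := by exact_mod_cast Nat.lt_succ_iff.1 k.2
      linarith
  have himg_meas : ∀ n, ∀ k : Fin (n + 1), MeasurableSet (f '' I n k) := by
    intro n k
    exact ((isCompact_Icc).image_of_continuousOn (hcont.mono (hIsub n k))).measurableSet
  -- volume of images
  have himg_vol : ∀ n, ∀ k : Fin (n + 1),
      volume (f '' I n k) ≤ ENNReal.ofReal (2 * C * (1 / (n + 1)) ^ α) := by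
    intro n k
    have ha : ((k : ℝ) / (n + 1)) ∈ Icc (0 : ℝ) 1 := hIsub n k ⟨le_rfl, by
      apply div_le_div_of_nonneg_right ?_ (by positivity)
      · linarith⟩
    set a : ℝ := (k : ℝ) / (n + 1) with ha_def
    set δ : ℝ := C * (1 / (n + 1)) ^ α with hδ
    have hsub : f '' I n k ⊆ Icc (f a - δ) (f a + δ) := by
      rintro _ ⟨x, hx, rfl⟩
      have hx01 := hIsub n k hx
      obtain ⟨hx1, hx2⟩ := hx
      have heq : ((k : ℝ) + 1) / (n + 1) = a + 1 / (n + 1) := by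
        rw [ha_def, ← add_div]
      have hpos : (0 : ℝ) ≤ 1 / (n + 1) := by positivity
      have h1 : |x - a| ≤ 1 / (n + 1) := by
        rw [abs_le]
        constructor
        · linarith
        · rw [heq] at hx2; linarith
      have h2 : |f x - f a| ≤ δ := by
        calc |f x - f a| ≤ C * |x - a| ^ α := hf x hx01 a ha
          _ ≤ δ := by
              rw [hδ]
              exact mul_le_mul_of_nonneg_left
                (Real.rpow_le_rpow (abs_nonneg _) h1 hα₁.le) hC.le
      rw [abs_le] at h2
      constructor <;> linarith [h2.1, h2.2]
    calc volume (f '' I n k) ≤ volume (Icc (f a - δ) (f a + δ)) := measure_mono hsub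
      _ = ENNReal.ofReal (2 * δ) := by rw [Real.volume_Icc]; ring_nf
      _ = _ := by rw [hδ]; ring_nf
  -- the key pointwise/integral estimate
  have key : ∀ d : ℝ, 0 < d → 1 - α < d → ∀ᵐ y : ℝ ∂volume,
      μH[d] {x : ℝ | x ∈ Icc (0 : ℝ) 1 ∧ f x = y} = 0 := by
    intro d hd0 hd
    set F : ℕ → ℝ → ℝ≥0∞ := fun n y =>
      ∑ k : Fin (n + 1), (f '' I n k).indicator
        (fun _ => ENNReal.ofReal ((1 : ℝ) / (n + 1)) ^ d) y with hF
    have hFmeas : ∀ n, Measurable (F n) := by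
      intro n
      apply Finset.measurable_sum
      intro k _
      exact measurable_const.indicator (himg_meas n k)
    -- pointwise bound
    have hpt : ∀ y : ℝ, μH[d] {x : ℝ | x ∈ Icc (0 : ℝ) 1 ∧ f x = y}
        ≤ atTop.liminf (fun n => F n y) := by
      intro y
      set t : ∀ n : ℕ, Fin (n + 1) → Set ℝ := fun n k =>
        if y ∈ f '' I n k then I n k else ∅ with ht
      have hdiam : ∀ n, ∀ k : Fin (n + 1),
          Metric.ediam (t n k) ≤ ENNReal.ofReal ((1 : ℝ) / (n + 1)) := by
        intro n k
        simp only [ht]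
        by_cases hy : y ∈ f '' I n k
        · rw [if_pos hy, hI, Real.ediam_Icc]
          apply ENNReal.ofReal_le_ofReal
          rw [div_sub_div_same]
          ring_nf
          exact le_rfl
        · rw [if_neg hy]; simp
      have hr0 : Tendsto (fun n : ℕ => ENNReal.ofReal ((1 : ℝ) / (n + 1))) atTop (𝓝 0) := by
        have := ENNReal.tendsto_ofReal (a := (0:ℝ))
          tendsto_one_div_add_atTop_nhds_zero_nat
        simpa using this
      have hcover : ∀ n : ℕ, {x : ℝ | x ∈ Icc (0 : ℝ) 1 ∧ f x = y} ⊆ ⋃ k, t n k := by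
        intro n x hx
        obtain ⟨hx01, hfx⟩ := hx
        set k0 : ℕ := min n ⌊x * (n + 1)⌋₊ with hk0
        have hk0n : k0 ≤ n := min_le_left _ _
        have hxk : x ∈ I n k0 := by
          have hN : (0 : ℝ) < n + 1 := by positivity
          constructor
          · rw [div_le_iff₀ hN]
            calc (k0 : ℝ) ≤ (⌊x * (n + 1)⌋₊ : ℝ) := Nat.cast_le.2 (min_le_right _ _)
              _ ≤ x * (n + 1) := Nat.floor_le (mul_nonneg hx01.1 (by positivity))
          · rw [le_div_iff₀ hN]
            rcases le_or_gt ⌊x * (n + 1)⌋₊ n with h | h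
            · have hk0e : k0 = ⌊x * (n + 1)⌋₊ := min_eq_right h
              have := Nat.lt_floor_add_one (x * (n + 1))
              rw [hk0e]
              push_cast
              linarith [this]
            · have hk0e : k0 = n := min_eq_left h.le
              rw [hk0e]
              nlinarith [hx01.2, hN]
        refine mem_iUnion.2 ⟨⟨k0, Nat.lt_succ_of_le hk0n⟩, ?_⟩
        rw [ht]
        simp only
        rw [if_pos ⟨x, hxk, hfx⟩]
        exact hxk
      have := MeasureTheory.Measure.hausdorffMeasure_le_liminf_sum d
        {x : ℝ | x ∈ Icc (0 : ℝ) 1 ∧ f x = y}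
        (fun n : ℕ => ENNReal.ofReal ((1 : ℝ) / (n + 1))) hr0 t
        (Eventually.of_forall hdiam) (Eventually.of_forall hcover)
      have hsum : ∀ n : ℕ, ∑ i : Fin (n + 1), Metric.ediam (t n i) ^ d = F n y := by
        intro n
        apply Finset.sum_congr rfl
        intro k _
        simp only [ht]
        by_cases hy : y ∈ f '' I n k
        · rw [if_pos hy, indicator_of_mem hy, hI, Real.ediam_Icc]
          congr 2
          rw [div_sub_div_same]
          ring_nf
        · rw [if_neg hy, indicator_of_notMem hy, Metric.ediam_empty,
            ENNReal.zero_rpow_of_pos hd0]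
      rw [show (fun n : ℕ => ∑ i : Fin (n + 1), Metric.ediam (t n i) ^ d)
        = fun n => F n y from funext hsum] at this
      exact this
    -- integral bound
    have hint : ∀ n : ℕ, ∫⁻ y, F n y ≤ ENNReal.ofReal (2 * C * (1 / (n + 1)) ^ (α + d - 1)) := by
      intro n
      rw [hF]
      simp only
      rw [lintegral_finset_sum _ (fun k _ => measurable_const.indicator (himg_meas n k))]
      have hterm : ∀ k : Fin (n + 1),
          (∫⁻ y, (f '' I n k).indicator
            (fun _ => ENNReal.ofReal ((1 : ℝ) / (n + 1)) ^ d) y)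
          ≤ ENNReal.ofReal ((1 : ℝ) / (n + 1)) ^ d
              * ENNReal.ofReal (2 * C * (1 / (n + 1)) ^ α) := by
        intro k
        rw [lintegral_indicator_const (himg_meas n k)]
        exact mul_le_mul_right (himg_vol n k) _
      calc (∑ k : Fin (n + 1), ∫⁻ y, (f '' I n k).indicator
            (fun _ => ENNReal.ofReal ((1 : ℝ) / (n + 1)) ^ d) y)
          ≤ ∑ _k : Fin (n + 1), ENNReal.ofReal ((1 : ℝ) / (n + 1)) ^ d
              * ENNReal.ofReal (2 * C * (1 / (n + 1)) ^ α) :=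
            Finset.sum_le_sum fun k _ => hterm k
        _ = (n + 1 : ℕ) * (ENNReal.ofReal ((1 : ℝ) / (n + 1)) ^ d
              * ENNReal.ofReal (2 * C * (1 / (n + 1)) ^ α)) := by
            rw [Finset.sum_const, Finset.card_univ, Fintype.card_fin, nsmul_eq_mul]
        _ = ENNReal.ofReal (2 * C * (1 / (n + 1)) ^ (α + d - 1)) := by
            have hu : (0 : ℝ) < 1 / (n + 1) := by positivity
            rw [ENNReal.ofReal_rpow_of_pos hu, ← ENNReal.ofReal_mul (by positivity),
              ← ENNReal.ofReal_natCast (n + 1), ← ENNReal.ofReal_mul (by positivity)]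
            congr 1
            push_cast
            rw [show α + d - 1 = d + α + (-1) by ring, Real.rpow_add hu, Real.rpow_add hu,
              Real.rpow_neg_one]
            field_simp
      done
    -- the integrals tend to 0
    have hlim : Tendsto (fun n : ℕ => ENNReal.ofReal (2 * C * (1 / (n + 1 : ℝ)) ^ (α + d - 1)))
        atTop (𝓝 0) := by
      have hp : 0 < α + d - 1 := by linarith
      have h1 : Tendsto (fun n : ℕ => (1 / (n + 1 : ℝ)) ^ (α + d - 1)) atTop (𝓝 0) := by
        have hc : ContinuousAt (fun x : ℝ => x ^ (α + d - 1)) 0 :=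
          Real.continuousAt_rpow_const 0 _ (Or.inr hp.le)
        have := hc.tendsto.comp tendsto_one_div_add_atTop_nhds_zero_nat
        simpa [Function.comp_def, Real.zero_rpow hp.ne'] using this
      have h2 : Tendsto (fun n : ℕ => 2 * C * (1 / (n + 1 : ℝ)) ^ (α + d - 1)) atTop (𝓝 0) := by
        simpa using h1.const_mul (2 * C)
      simpa using ENNReal.tendsto_ofReal h2
    -- Fatou
    set G : ℝ → ℝ≥0∞ := fun y => atTop.liminf (fun n => F n y) with hG
    have hGmeas : Measurable G := Measurable.liminf hFmeas
    have hGint : ∫⁻ y, G y = 0 := by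
      refine le_antisymm ?_ zero_le
      calc ∫⁻ y, G y ≤ atTop.liminf (fun n => ∫⁻ y, F n y) := lintegral_liminf_le hFmeas
        _ ≤ atTop.liminf (fun n : ℕ =>
              ENNReal.ofReal (2 * C * (1 / (n + 1 : ℝ)) ^ (α + d - 1))) :=
            Filter.liminf_le_liminf (Eventually.of_forall hint)
        _ = 0 := hlim.liminf_eq
    have hG0 : ∀ᵐ y : ℝ ∂volume, G y = 0 := (lintegral_eq_zero_iff hGmeas).1 hGint
    filter_upwards [hG0] with y hy
    exact le_antisymm (hy ▸ hpt y) zero_le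
  -- assemble
  have main : ∀ m : ℕ, ∀ᵐ y : ℝ ∂volume,
      dimH {x : ℝ | x ∈ Icc (0 : ℝ) 1 ∧ f x = y}
        ≤ ENNReal.ofReal (1 - α + 1 / (m + 1)) := by
    intro m
    set d : ℝ := 1 - α + 1 / (m + 1) with hd
    have hd0 : 0 < d := by
      have : (0:ℝ) < 1 / (m + 1) := by positivity
      rw [hd]; linarith
    have hdgt : 1 - α < d := by
      have : (0:ℝ) < 1 / (m + 1) := by positivity
      rw [hd]; linarith
    filter_upwards [key d hd0 hdgt] with y hy
    have hne : μH[(d.toNNReal : ℝ)] {x : ℝ | x ∈ Icc (0 : ℝ) 1 ∧ f x = y} ≠ ⊤ := by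
      rw [Real.coe_toNNReal d hd0.le, hy]
      exact ENNReal.zero_ne_top
    have h2 := dimH_le_of_hausdorffMeasure_ne_top hne
    have h3 : ENNReal.ofReal d = (d.toNNReal : ℝ≥0∞) := rfl
    rw [hd] at h2 h3 ⊢
    rw [h3]
    exact h2
  filter_upwards [ae_all_iff.2 main] with y hy
  refine ENNReal.le_of_forall_pos_le_add fun ε hε _ => ?_
  obtain ⟨m, hm⟩ := exists_nat_one_div_lt (K := ℝ) (by exact_mod_cast hε)
  calc dimH {x : ℝ | x ∈ Icc (0 : ℝ) 1 ∧ f x = y}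
      ≤ ENNReal.ofReal (1 - α + 1 / (m + 1)) := hy m
    _ ≤ ENNReal.ofReal (1 - α) + ENNReal.ofReal (1 / (m + 1)) := ENNReal.ofReal_add_le
    _ ≤ ENNReal.ofReal (1 - α) + ε := by
        gcongr
        rw [← ENNReal.ofReal_coe_nnreal]
        exact ENNReal.ofReal_le_ofReal hm.le
end
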